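/- Let E be a real inner product space and let κ > 0. Let γ : ℝ → E be a twice continuously differentiable curve such that for all t ∈ [0, T] one has ‖γ(t)‖ = 1, ‖γ'(t)‖ = 1, and ‖γ''(t)‖ ≤ κ, where 0 < T ≤ 2/κ. Let s♮, z ∈ E satisfy ‖s♮ - γ(0)‖ ≤ 1/κ and ‖z‖ ≤ 1/(30κ). Then for every t ∈ [0, T], -⟨γ''(t), s♮ + z⟩ ≤ 121/30. -/

import Mathlib

open RealInnerProductSpace

theorem stmt_4 {E : Type*} [NormedAddCommGroup E] [InnerProductSpace ℝ E]
    (T κ : ℝ) (hκ : 0 < κ) (hT : 0 < T) (hTκ : T ≤ 2 / κ) (γ : ℝ → E)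
    (hγ : ContDiff ℝ 2 γ)
    (hsphere : ∀ t ∈ Set.Icc (0 : ℝ) T, ‖γ t‖ = 1)
    (hspeed : ∀ t ∈ Set.Icc (0 : ℝ) T, ‖deriv γ t‖ = 1)
    (hcurv : ∀ t ∈ Set.Icc (0 : ℝ) T, ‖deriv (deriv γ) t‖ ≤ κ)
    (s z : E) (hs : ‖s - γ 0‖ ≤ 1 / κ) (hz : ‖z‖ ≤ 1 / (30 * κ)) :
    ∀ t ∈ Set.Icc (0 : ℝ) T, -⟪deriv (deriv γ) t, s + z⟫ ≤ 121 / 30 := by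
  have h2 : ContDiff ℝ 1 (deriv γ) := by
    rw [show (2 : WithTop ℕ∞) = 1 + 1 from rfl, contDiff_succ_iff_deriv] at hγ
    exact hγ.2.2
  have hdγ : Differentiable ℝ γ := hγ.differentiable two_ne_zero
  have hdγ' : Differentiable ℝ (deriv γ) := h2.differentiable one_ne_zero
  have hcγ'' : Continuous (deriv (deriv γ)) := by
    rw [contDiff_one_iff_deriv] at h2; exact h2.2
  -- g t = ⟪γ' t, γ t⟫ vanishes on Icc 0 T
  have hgd : ∀ t : ℝ, HasDerivAt (fun u => ⟪γ u, γ u⟫)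
      (⟪γ t, deriv γ t⟫ + ⟪deriv γ t, γ t⟫) t :=
    fun t => (hdγ t).hasDerivAt.inner ℝ (hdγ t).hasDerivAt
  have hg0 : ∀ t ∈ Set.Ioo (0 : ℝ) T, ⟪deriv γ t, γ t⟫ = 0 := by
    intro t ht
    have hev : (fun u => ⟪γ u, γ u⟫) =ᶠ[nhds t] fun _ => (1 : ℝ) := by
      filter_upwards [Ioo_mem_nhds ht.1 ht.2] with u hu
      have := hsphere u (Set.Ioo_subset_Icc_self hu)
      have : ⟪γ u, γ u⟫ = ‖γ u‖ ^ 2 := real_inner_self_eq_norm_sq _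
      simp [this, hsphere u (Set.Ioo_subset_Icc_self hu)]
    have h0 : HasDerivAt (fun u => ⟪γ u, γ u⟫) 0 t :=
      (hasDerivAt_const t (1 : ℝ)).congr_of_eventuallyEq hev
    have h := h0.unique (hgd t)
    have hc := real_inner_comm (γ t) (deriv γ t)
    rw [real_inner_comm]
    linarith [h, hc]
  have hgcont : Continuous fun t => ⟪deriv γ t, γ t⟫ :=
    hdγ'.continuous.inner hdγ.continuous
  have hg0' : ∀ t ∈ Set.Icc (0 : ℝ) T, ⟪deriv γ t, γ t⟫ = 0 := by
    intro t ht
    have hcl : t ∈ closure (Set.Ioo (0 : ℝ) T) := by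
      rw [closure_Ioo hT.ne]; exact ht
    have : Set.Ioo (0 : ℝ) T ⊆ {u | ⟪deriv γ u, γ u⟫ = 0} := fun u hu => hg0 u hu
    have hclosed : IsClosed {u : ℝ | ⟪deriv γ u, γ u⟫ = 0} :=
      isClosed_eq hgcont continuous_const
    exact hclosed.closure_subset (closure_mono this hcl)
  -- ⟪γ'' t, γ t⟫ = -1 on Icc
  have hhd : ∀ t : ℝ, HasDerivAt (fun u => ⟪deriv γ u, γ u⟫)
      (⟪deriv γ t, deriv γ t⟫ + ⟪deriv (deriv γ) t, γ t⟫) t :=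
    fun t => (hdγ' t).hasDerivAt.inner ℝ (hdγ t).hasDerivAt
  have hkey0 : ∀ t ∈ Set.Ioo (0 : ℝ) T,
      ⟪deriv γ t, deriv γ t⟫ + ⟪deriv (deriv γ) t, γ t⟫ = 0 := by
    intro t ht
    have hev : (fun u => ⟪deriv γ u, γ u⟫) =ᶠ[nhds t] fun _ => (0 : ℝ) := by
      filter_upwards [Ioo_mem_nhds ht.1 ht.2] with u hu
      exact hg0' u (Set.Ioo_subset_Icc_self hu)
    have h0 : HasDerivAt (fun u => ⟪deriv γ u, γ u⟫) 0 t :=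
      (hasDerivAt_const t (0 : ℝ)).congr_of_eventuallyEq hev
    exact (h0.unique (hhd t)).symm ▸ rfl
  have hkey : ∀ t ∈ Set.Icc (0 : ℝ) T,
      ⟪deriv γ t, deriv γ t⟫ + ⟪deriv (deriv γ) t, γ t⟫ = 0 := by
    intro t ht
    have hcl : t ∈ closure (Set.Ioo (0 : ℝ) T) := by
      rw [closure_Ioo hT.ne]; exact ht
    have hcont : Continuous fun u => ⟪deriv γ u, deriv γ u⟫ + ⟪deriv (deriv γ) u, γ u⟫ :=
      (hdγ'.continuous.inner hdγ'.continuous).add (hcγ''.inner hdγ.continuous)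
    have hsub : Set.Ioo (0 : ℝ) T ⊆
        {u | ⟪deriv γ u, deriv γ u⟫ + ⟪deriv (deriv γ) u, γ u⟫ = 0} :=
      fun u hu => hkey0 u hu
    exact (isClosed_eq hcont continuous_const).closure_subset (closure_mono hsub hcl)
  have hinner : ∀ t ∈ Set.Icc (0 : ℝ) T, ⟪deriv (deriv γ) t, γ t⟫ = -1 := by
    intro t ht
    have h1 : ⟪deriv γ t, deriv γ t⟫ = 1 := by
      rw [real_inner_self_eq_norm_sq, hspeed t ht]; norm_num
    have := hkey t ht
    linarith
  -- ‖γ t - γ 0‖ ≤ t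
  have hlip : ∀ t ∈ Set.Icc (0 : ℝ) T, ‖γ t - γ 0‖ ≤ 1 * (t - 0) := by
    apply norm_image_sub_le_of_norm_deriv_le_segment'
      (f' := deriv γ)
      (fun x _ => (hdγ x).hasDerivAt.hasDerivWithinAt)
    intro x hx
    exact le_of_eq (hspeed x (Set.Ico_subset_Icc_self hx))
  intro t ht
  set v := deriv (deriv γ) t with hv
  have hvκ : ‖v‖ ≤ κ := hcurv t ht
  have hdecomp : s + z = γ t + (s - γ 0) + (γ 0 - γ t) + z := by abel
  have hbound : ∀ w : E, -⟪v, w⟫ ≤ κ * ‖w‖ := by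
    intro w
    have := abs_real_inner_le_norm v w
    have h2 : ‖v‖ * ‖w‖ ≤ κ * ‖w‖ := by
      apply mul_le_mul_of_nonneg_right hvκ (norm_nonneg _)
    have habs : -⟪v, w⟫ ≤ |⟪v, w⟫| := neg_le_abs _
    linarith
  have e1 : -⟪v, γ t⟫ = 1 := by rw [hinner t ht]; ring
  have e2 : -⟪v, s - γ 0⟫ ≤ κ * (1 / κ) := le_trans (hbound _) (by
    apply mul_le_mul_of_nonneg_left hs hκ.le)
  have e3 : -⟪v, γ 0 - γ t⟫ ≤ κ * (2 / κ) := by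
    refine le_trans (hbound _) ?_
    apply mul_le_mul_of_nonneg_left _ hκ.le
    rw [norm_sub_rev]
    calc ‖γ t - γ 0‖ ≤ 1 * (t - 0) := hlip t ht
    _ ≤ 2 / κ := by linarith [ht.2]
  have e4 : -⟪v, z⟫ ≤ κ * (1 / (30 * κ)) := le_trans (hbound _) (by
    apply mul_le_mul_of_nonneg_left hz hκ.le)
  have hκ' : κ ≠ 0 := hκ.ne'
  have hsum : -⟪v, s + z⟫ = -⟪v, γ t⟫ + -⟪v, s - γ 0⟫ + -⟪v, γ 0 - γ t⟫ + -⟪v, z⟫ := by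
    rw [hdecomp, inner_add_right, inner_add_right, inner_add_right]; ring
  rw [hsum]
  have c1 : κ * (1 / κ) = 1 := by field_simp
  have c2 : κ * (2 / κ) = 2 := by field_simp
  have c3 : κ * (1 / (30 * κ)) = 1 / 30 := by field_simp
  rw [c1] at e2; rw [c2] at e3; rw [c3] at e4
  linarith
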